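/- Let P₀ be a probability measure on ℝ^d and U, V probability measures on ℝ^d whose characteristic functions are strictly positive real numbers at every ω ∈ ℝ^d. Let μ = ½(P₀⋆U) + ½(P₀⋆V) be the equal mixture. Then for every ω ∈ ℝ^d, φ_μ(ω) = φ_{P₀}(ω) · (½φ_U(ω) + ½φ_V(ω)), the factor ½φ_U(ω) + ½φ_V(ω) is a strictly positive real number, and hence for every ω with φ_{P₀}(ω) ≠ 0 the phase of μ equals the phase of P₀: φ_μ(ω)/|φ_μ(ω)| = φ_{P₀}(ω)/|φ_{P₀}(ω)|. -/

import Mathlib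

open MeasureTheory RealInnerProductSpace ENNReal

/-- The characteristic function of a measure `P` on `ℝ^d`. -/
noncomputable def charFun' {d : ℕ} (P : Measure (EuclideanSpace ℝ (Fin d)))
    (ω : EuclideanSpace ℝ (Fin d)) : ℂ :=
  ∫ x, Complex.exp (Complex.I * (⟪ω, x⟫ : ℝ)) ∂P

/-- The phase function of a measure `P` on `ℝ^d`. -/
noncomputable def phase {d : ℕ} (P : Measure (EuclideanSpace ℝ (Fin d)))
    (ω : EuclideanSpace ℝ (Fin d)) : ℂ :=
  charFun' P ω / ((‖charFun' P ω‖ : ℝ) : ℂ)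

lemma cont_f {d : ℕ} (ω : EuclideanSpace ℝ (Fin d)) :
    Continuous (fun x : EuclideanSpace ℝ (Fin d) => Complex.exp (Complex.I * (⟪ω, x⟫ : ℝ))) := by
  exact Complex.continuous_exp.comp
    (continuous_const.mul (Complex.continuous_ofReal.comp (continuous_const.inner continuous_id)))

lemma integrable_f {d : ℕ} (P : Measure (EuclideanSpace ℝ (Fin d))) [IsFiniteMeasure P]
    (ω : EuclideanSpace ℝ (Fin d)) :
    Integrable (fun x : EuclideanSpace ℝ (Fin d) => Complex.exp (Complex.I * (⟪ω, x⟫ : ℝ))) P := by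
  refine (integrable_const (1:ℝ)).mono' (cont_f ω).aestronglyMeasurable ?_
  filter_upwards with x
  rw [Complex.norm_exp]
  simp [mul_comm]

lemma charFun_conv {d : ℕ} (P Q : Measure (EuclideanSpace ℝ (Fin d)))
    [IsProbabilityMeasure P] [IsProbabilityMeasure Q] (ω : EuclideanSpace ℝ (Fin d)) :
    charFun' (P.conv Q) ω = charFun' P ω * charFun' Q ω := by
  unfold charFun' Measure.conv
  rw [integral_map (by fun_prop) (cont_f ω).aestronglyMeasurable]
  have : ∀ p : EuclideanSpace ℝ (Fin d) × EuclideanSpace ℝ (Fin d),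
      Complex.exp (Complex.I * ((⟪ω, p.1 + p.2⟫ : ℝ) : ℂ)) =
      Complex.exp (Complex.I * (⟪ω, p.1⟫ : ℝ)) * Complex.exp (Complex.I * (⟪ω, p.2⟫ : ℝ)) := by
    intro p
    rw [← Complex.exp_add, inner_add_right]
    push_cast
    ring_nf
  simp_rw [this]
  exact integral_prod_mul (μ := P) (ν := Q) (fun x => Complex.exp (Complex.I * (⟪ω, x⟫ : ℝ))) (fun x => Complex.exp (Complex.I * (⟪ω, x⟫ : ℝ)))


/-- For the equal mixture `μ = ½(P₀⋆U) + ½(P₀⋆V)` with `U`, `V` SPD components: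
`φ_μ = φ_{P₀}·(½φ_U + ½φ_V)`, the factor `½φ_U + ½φ_V` is a strictly positive real number,
and wherever `φ_{P₀} ≠ 0` the phase of `μ` equals the phase of `P₀`. -/
theorem stmt_13 {d : ℕ} (P₀ U V : Measure (EuclideanSpace ℝ (Fin d)))
    [IsProbabilityMeasure P₀] [IsProbabilityMeasure U] [IsProbabilityMeasure V]
    (hU : ∀ ω : EuclideanSpace ℝ (Fin d), ∃ r : ℝ, 0 < r ∧ charFun' U ω = (r : ℂ))
    (hV : ∀ ω : EuclideanSpace ℝ (Fin d), ∃ r : ℝ, 0 < r ∧ charFun' V ω = (r : ℂ))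
    (μ : Measure (EuclideanSpace ℝ (Fin d)))
    (hμ : μ = (1/2 : ℝ≥0∞) • (P₀.conv U) + (1/2 : ℝ≥0∞) • (P₀.conv V)) :
    ∀ ω : EuclideanSpace ℝ (Fin d),
      charFun' μ ω = charFun' P₀ ω * ((1/2 : ℂ) * charFun' U ω + (1/2 : ℂ) * charFun' V ω) ∧
      (∃ r : ℝ, 0 < r ∧ (1/2 : ℂ) * charFun' U ω + (1/2 : ℂ) * charFun' V ω = (r : ℂ)) ∧
      (charFun' P₀ ω ≠ 0 → phase μ ω = phase P₀ ω) := by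
  intro ω
  obtain ⟨rU, hrU, hUω⟩ := hU ω
  obtain ⟨rV, hrV, hVω⟩ := hV ω
  have h1 : charFun' μ ω = charFun' P₀ ω * ((1/2 : ℂ) * charFun' U ω + (1/2 : ℂ) * charFun' V ω) := by
    have key : charFun' μ ω =
        (1/2 : ℝ) • charFun' (P₀.conv U) ω + (1/2 : ℝ) • charFun' (P₀.conv V) ω := by
      unfold charFun'
      rw [hμ, integral_add_measure
        ((integrable_f _ ω).smul_measure (by norm_num))
        ((integrable_f _ ω).smul_measure (by norm_num)),
        integral_smul_measure, integral_smul_measure]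
      norm_num
    rw [key, charFun_conv, charFun_conv]
    simp only [Complex.real_smul]
    push_cast
    ring
  refine ⟨h1, ⟨rU/2 + rV/2, by positivity, by rw [hUω, hVω]; push_cast; ring⟩, ?_⟩
  intro hP0
  have hs : (1/2 : ℂ) * charFun' U ω + (1/2 : ℂ) * charFun' V ω = ((rU/2 + rV/2 : ℝ) : ℂ) := by
    rw [hUω, hVω]; push_cast; ring
  set s : ℝ := rU/2 + rV/2 with hsdef
  have hspos : 0 < s := by positivity
  have hμω : charFun' μ ω = charFun' P₀ ω * (s : ℂ) := by rw [h1, hs]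
  unfold phase
  rw [hμω, norm_mul, Complex.norm_real, Real.norm_of_nonneg hspos.le]
  push_cast
  rw [mul_div_mul_right _ _ (by exact_mod_cast hspos.ne')]
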